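/- Let n ≥ 2, n = 2ν + ρ with ρ ∈ {0,1}, and let q(y) = Σ_{j=0}^{ν} x_j y^{ν−j} with x_j defined by ((u+v)^{n+2} − u^{n+2} − v^{n+2})/(uv) = Σ_{j=0}^{ν} x_j (u+v)^{n−2j}(uv)^j. Then q^{(j)}(2) > 0 for every 0 ≤ j ≤ ν. -/

import Mathlib

open Polynomial


noncomputable def Pb : ℕ → Polynomial ℝ
  | 0 => 2
  | 1 => X
  | m+2 => X * Pb (m+1) - Pb m

noncomputable def Cb : ℕ → Polynomial ℝ
  | 0 => 1
  | 1 => X - 1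
  | m+2 => X * Cb (m+1) - Cb m

lemma pascal' (a b : ℕ) (hb : 1 ≤ b) (hab : b ≤ a) :
    a.choose b = (a-1).choose (b-1) + (a-1).choose b := by
  obtain ⟨a', rfl⟩ : ∃ a', a = a'+1 := ⟨a-1, by omega⟩
  obtain ⟨b', rfl⟩ : ∃ b', b = b'+1 := ⟨b-1, by omega⟩
  simpa using Nat.choose_succ_succ' a' b'

lemma hmono (m : ℕ) : (m - m/2).choose (m/2) ≤ (m+2 - (m+2)/2).choose ((m+2)/2) := by
  rcases Nat.even_or_odd m with ⟨a, rfl⟩ | ⟨a, rfl⟩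
  · rw [show a+a - (a+a)/2 = a from by omega, show (a+a)/2 = a from by omega,
      show a+a+2 - (a+a+2)/2 = a+1 from by omega, show (a+a+2)/2 = a+1 from by omega]
    simp [Nat.choose_self]
  · rw [show 2*a+1 - (2*a+1)/2 = a+1 from by omega, show (2*a+1)/2 = a from by omega,
      show 2*a+1+2 - (2*a+1+2)/2 = a+2 from by omega, show (2*a+1+2)/2 = a+1 from by omega,
      Nat.choose_succ_self_right, Nat.choose_succ_self_right]
    omega

lemma Pb_natDegree_le : ∀ m, (Pb m).natDegree ≤ m := by
  have key : ∀ m, (Pb m).natDegree ≤ m ∧ (Pb (m+1)).natDegree ≤ m+1 := by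
    intro m
    induction m with
    | zero =>
      constructor
      · show (2 : ℝ[X]).natDegree ≤ 0; simp [Pb]
      · show (X : ℝ[X]).natDegree ≤ 1; simp [Pb, natDegree_X_le]
    | succ k ih =>
      refine ⟨ih.2, ?_⟩
      show (X * Pb (k+1) - Pb k).natDegree ≤ k+2
      refine le_trans (natDegree_sub_le _ _) (max_le ?_ (le_trans ih.1 (by omega)))
      refine le_trans (natDegree_mul_le) ?_
      have := ih.2
      simp only [natDegree_X]
      omega
  exact fun m => (key m).1

lemma Cb_natDegree_le : ∀ m, (Cb m).natDegree ≤ m := by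
  have key : ∀ m, (Cb m).natDegree ≤ m ∧ (Cb (m+1)).natDegree ≤ m+1 := by
    intro m
    induction m with
    | zero =>
      constructor
      · show (1 : ℝ[X]).natDegree ≤ 0; simp
      · show (X - 1 : ℝ[X]).natDegree ≤ 1
        refine le_trans (natDegree_sub_le _ _) (max_le natDegree_X_le (by simp))
    | succ k ih =>
      refine ⟨ih.2, ?_⟩
      show (X * Cb (k+1) - Cb k).natDegree ≤ k+2
      refine le_trans (natDegree_sub_le _ _) (max_le ?_ (le_trans ih.1 (by omega)))
      refine le_trans (natDegree_mul_le) ?_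
      have := ih.2
      simp only [natDegree_X]
      omega
  exact fun m => (key m).1

lemma Pb_coeff_zero {m j : ℕ} (h : m < j) : (Pb m).coeff j = 0 :=
  coeff_eq_zero_of_natDegree_lt (lt_of_le_of_lt (Pb_natDegree_le m) h)

lemma Cb_coeff_zero {m j : ℕ} (h : m < j) : (Cb m).coeff j = 0 :=
  coeff_eq_zero_of_natDegree_lt (lt_of_le_of_lt (Cb_natDegree_le m) h)

lemma Pb_parity : ∀ m j, (m + j) % 2 = 1 → (Pb m).coeff j = 0 := by
  have key : ∀ m, (∀ j, (m + j) % 2 = 1 → (Pb m).coeff j = 0) ∧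
      (∀ j, (m + 1 + j) % 2 = 1 → (Pb (m+1)).coeff j = 0) := by
    intro m
    induction m with
    | zero =>
      constructor
      · intro j hj
        show (2 : ℝ[X]).coeff j = 0
        rw [show (2 : ℝ[X]) = C 2 from (map_ofNat C 2).symm, coeff_C, if_neg (by omega)]
      · intro j hj
        show (X : ℝ[X]).coeff j = 0
        rw [coeff_X, if_neg (by omega)]
    | succ k ih =>
      refine ⟨ih.2, ?_⟩
      intro j hj
      show (Pb (k+2)).coeff j = 0
      rw [show Pb (k+2) = X * Pb (k+1) - Pb k from rfl, coeff_sub]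
      cases j with
      | zero =>
        rw [mul_coeff_zero, coeff_X_zero, zero_mul, ih.1 0 (by omega)]
        ring
      | succ j' =>
        rw [coeff_X_mul, ih.2 j' (by omega), ih.1 (j'+1) (by omega)]
        ring
  exact fun m => (key m).1

lemma Pb_coeff_bound : ∀ m j, |(Pb m).coeff j| ≤ 2 * ((m - (m-j)/2).choose ((m-j)/2) : ℝ) := by
  have key : ∀ m, (∀ j, |(Pb m).coeff j| ≤ 2 * ((m - (m-j)/2).choose ((m-j)/2) : ℝ)) ∧
      (∀ j, |(Pb (m+1)).coeff j| ≤ 2 * (((m+1) - ((m+1)-j)/2).choose (((m+1)-j)/2) : ℝ)) := by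
    intro m
    induction m with
    | zero =>
      constructor
      · intro j
        show |(2 : ℝ[X]).coeff j| ≤ _
        rw [show (2 : ℝ[X]) = C 2 from (map_ofNat C 2).symm, coeff_C]
        rcases Nat.eq_zero_or_pos j with rfl | hj
        · simp
        · rw [if_neg (by omega)]
          simp only [abs_zero]
          positivity
      · intro j
        show |(X : ℝ[X]).coeff j| ≤ _
        rw [coeff_X]
        rcases eq_or_ne (1:ℕ) j with rfl | hj
        · simp
        · rw [if_neg hj]
          simp only [abs_zero]
          positivity
    | succ k ih =>
      refine ⟨ih.2, ?_⟩
      intro j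
      show |(Pb (k+2)).coeff j| ≤ _
      by_cases hbig : k+2 < j
      · rw [Pb_coeff_zero hbig]
        simp only [abs_zero]
        positivity
      rw [show Pb (k+2) = X * Pb (k+1) - Pb k from rfl, coeff_sub]
      cases j with
      | zero =>
        rw [mul_coeff_zero, coeff_X_zero, zero_mul, zero_sub, abs_neg]
        refine le_trans (ih.1 0) ?_
        simp only [Nat.sub_zero]
        exact mul_le_mul_of_nonneg_left (Nat.cast_le.mpr (hmono k)) (by norm_num)
      | succ j' =>
        rw [coeff_X_mul]
        by_cases hj : j' + 1 ≤ k
        · obtain ⟨i, hi0, hi1, hi2, hi3, hi4, hi5⟩ :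
              ∃ i, ((k+2)-(j'+1))/2 = i ∧ 1 ≤ i ∧ 2*i ≤ k+2 ∧ ((k+1)-j')/2 = i ∧
                (k-(j'+1))/2 = i-1 ∧ k - (i-1) = k+1-i :=
            ⟨((k+2)-(j'+1))/2, rfl, by omega, by omega, by omega, by omega, by omega⟩
          rw [hi0]
          have pas := pascal' (k+2-i) i (by omega) (by omega)
          rw [show k+2-i-1 = k+1-i from by omega] at pas
          have b1 := ih.2 j'
          rw [hi3] at b1
          have b2 := ih.1 (j'+1)
          rw [hi4, hi5] at b2
          calc |(Pb (k+1)).coeff j' - (Pb k).coeff (j'+1)|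
              ≤ |(Pb (k+1)).coeff j'| + |(Pb k).coeff (j'+1)| := abs_sub _ _
            _ ≤ 2 * ((k+1-i).choose i : ℝ) + 2 * ((k+1-i).choose (i-1) : ℝ) := by
                exact add_le_add b1 b2
            _ ≤ 2 * ((k+2-i).choose i : ℝ) := by
                rw [pas]; push_cast; linarith
        · -- j'+1 > k : second coeff vanishes
          rw [Pb_coeff_zero (show k < j'+1 from by omega), sub_zero]
          refine le_trans (ih.2 j') ?_
          have h1 : ((k+1)-j') = ((k+2)-(j'+1)) := by omega
          rw [h1]
          exact mul_le_mul_of_nonneg_left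
            (Nat.cast_le.mpr (Nat.choose_le_choose _ (by omega))) (by norm_num)
  exact fun m => (key m).1

lemma Cb_coeff_bound : ∀ m j, |(Cb m).coeff j| ≤ (((m - (m-j)/2).choose ((m-j)/2) : ℕ) : ℝ) := by
  have key : ∀ m, (∀ j, |(Cb m).coeff j| ≤ (((m - (m-j)/2).choose ((m-j)/2) : ℕ) : ℝ)) ∧
      (∀ j, |(Cb (m+1)).coeff j| ≤ ((((m+1) - ((m+1)-j)/2).choose (((m+1)-j)/2) : ℕ) : ℝ)) := by
    intro m
    induction m with
    | zero =>
      constructor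
      · intro j
        show |(1 : ℝ[X]).coeff j| ≤ _
        rw [show (1 : ℝ[X]) = C 1 from by simp, coeff_C]
        rcases Nat.eq_zero_or_pos j with rfl | hj
        · simp
        · rw [if_neg (by omega)]
          simp only [abs_zero]
          positivity
      · intro j
        show |(X - 1 : ℝ[X]).coeff j| ≤ _
        rw [coeff_sub, show (1 : ℝ[X]) = C 1 from by simp, coeff_C, coeff_X]
        match j with
        | 0 => norm_num
        | 1 => norm_num
        | (j+2) =>
          rw [if_neg (by omega), if_neg (by omega)]
          simp only [sub_zero, abs_zero]
          positivity
    | succ k ih =>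
      refine ⟨ih.2, ?_⟩
      intro j
      show |(Cb (k+2)).coeff j| ≤ _
      by_cases hbig : k+2 < j
      · rw [Cb_coeff_zero hbig]
        simp only [abs_zero]
        positivity
      rw [show Cb (k+2) = X * Cb (k+1) - Cb k from rfl, coeff_sub]
      cases j with
      | zero =>
        rw [mul_coeff_zero, coeff_X_zero, zero_mul, zero_sub, abs_neg]
        refine le_trans (ih.1 0) ?_
        simp only [Nat.sub_zero]
        exact Nat.cast_le.mpr (hmono k)
      | succ j' =>
        rw [coeff_X_mul]
        by_cases hj : j' + 1 ≤ k
        · obtain ⟨i, hi0, hi1, hi2, hi3, hi4, hi5⟩ :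
              ∃ i, ((k+2)-(j'+1))/2 = i ∧ 1 ≤ i ∧ 2*i ≤ k+2 ∧ ((k+1)-j')/2 = i ∧
                (k-(j'+1))/2 = i-1 ∧ k - (i-1) = k+1-i :=
            ⟨((k+2)-(j'+1))/2, rfl, by omega, by omega, by omega, by omega, by omega⟩
          rw [hi0]
          have pas := pascal' (k+2-i) i (by omega) (by omega)
          rw [show k+2-i-1 = k+1-i from by omega] at pas
          have b1 := ih.2 j'
          rw [hi3] at b1
          have b2 := ih.1 (j'+1)
          rw [hi4, hi5] at b2
          calc |(Cb (k+1)).coeff j' - (Cb k).coeff (j'+1)|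
              ≤ |(Cb (k+1)).coeff j'| + |(Cb k).coeff (j'+1)| := abs_sub _ _
            _ ≤ ((k+1-i).choose i : ℝ) + ((k+1-i).choose (i-1) : ℝ) := add_le_add b1 b2
            _ ≤ ((k+2-i).choose i : ℝ) := by rw [pas]; push_cast; linarith
        · rw [Cb_coeff_zero (show k < j'+1 from by omega), sub_zero]
          refine le_trans (ih.2 j') ?_
          have h1 : ((k+1)-j') = ((k+2)-(j'+1)) := by omega
          rw [h1]
          exact Nat.cast_le.mpr (Nat.choose_le_choose _ (by omega))
  exact fun m => (key m).1


lemma Pb_eval (t : ℝ) (ht : t ≠ 0) : ∀ m, (Pb m).eval (t + 1/t) = t^m + (1/t)^m := by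
  have key : ∀ m, (Pb m).eval (t+1/t) = t^m + (1/t)^m ∧
      (Pb (m+1)).eval (t+1/t) = t^(m+1) + (1/t)^(m+1) := by
    intro m
    induction m with
    | zero =>
      constructor
      · simp [Pb]; norm_num
      · simp [Pb]
    | succ k ih =>
      refine ⟨ih.2, ?_⟩
      show (Pb (k+2)).eval _ = _
      simp only [Pb, eval_sub, eval_mul, eval_X, ih.1, ih.2]
      linear_combination (t^k + (1/t)^k) * mul_inv_cancel₀ ht
  exact fun m => (key m).1

lemma Cb_eval (t : ℝ) (ht : t ≠ 0) :
    ∀ m, (Cb m).eval (t + 1/t) * (t^m * (t+1)) = t^(2*m+1) + 1 := by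
  have key : ∀ m, (Cb m).eval (t+1/t) * (t^m * (t+1)) = t^(2*m+1) + 1 ∧
      (Cb (m+1)).eval (t+1/t) * (t^(m+1) * (t+1)) = t^(2*(m+1)+1) + 1 := by
    intro m
    induction m with
    | zero =>
      constructor
      · simp [Cb]
      · show (Cb 1).eval _ * _ = _
        simp only [Cb, eval_sub, eval_X, eval_one]
        field_simp
        ring
    | succ k ih =>
      refine ⟨ih.2, ?_⟩
      show (Cb (k+2)).eval _ * _ = _
      simp only [Cb, eval_sub, eval_mul, eval_X]
      have h1 := ih.1
      have h2 := ih.2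
      field_simp at h1 h2 ⊢
      linear_combination (t*(t*t+1))*h2 - t^3*h1
  exact fun m => (key m).1


lemma choose_mul_choose (N i : ℕ) (h : 2*i ≤ N) :
    N.choose i * (N-i).choose i = N.choose (2*i) * (2*i).choose i := by
  have := Nat.choose_mul (n := N) (k := 2*i) (s := i) (by omega)
  rw [show 2*i - i = i from by omega] at this
  omega

lemma central_bound (i : ℕ) (hi : 1 ≤ i) : 2 * (2*i).choose i ≤ 2^(2*i) := by
  have hsum := Nat.sum_range_choose (2*i-1)
  have hpair : (2*i-1).choose (i-1) + (2*i-1).choose i ≤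
      ∑ k ∈ Finset.range (2*i-1+1), (2*i-1).choose k := by
    rw [← Finset.sum_pair (show i-1 ≠ i from by omega)]
    exact Finset.sum_le_sum_of_subset (by
      intro x hx
      simp at hx ⊢
      omega)
  have hps : (2*i).choose i = (2*i-1).choose (i-1) + (2*i-1).choose i := by
    have := pascal' (2*i) i (by omega) (by omega)
    omega
  have hpow : 2^(2*i) = 2 * 2^(2*i-1) := by
    rw [← pow_succ']
    congr 1
    omega
  omega

lemma mono_half {N : ℕ} : ∀ b, ∀ a ≤ b, 2*b ≤ N → N.choose a ≤ N.choose b := by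
  intro b
  induction b with
  | zero => intro a ha _; interval_cases a; rfl
  | succ c ih =>
    intro a ha hN
    rcases eq_or_lt_of_le ha with rfl | hlt
    · rfl
    · exact le_trans (ih a (by omega) (by omega))
        (Nat.choose_le_succ_of_lt_half_left (by omega))

lemma choose_ge_of_between {N c i : ℕ} (h1 : c ≤ i) (h2 : i ≤ N - c) (h3 : 2*c ≤ N) :
    N.choose c ≤ N.choose i := by
  by_cases hi : 2*i ≤ N
  · exact mono_half i c h1 hi
  · have hsy : N.choose i = N.choose (N - i) := (Nat.choose_symm (by omega)).symm
    rw [hsy]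
    exact mono_half (N-i) c (by omega) (by omega)

lemma L1 (m i : ℕ) (hi : 1 ≤ i) (him : 2*i ≤ m) (hm : 2 ≤ m) :
    2 * (m-i).choose i + (m-i).choose (i-1) < 2^(2*i) * m.choose (2*i) := by
  rcases eq_or_lt_of_le hi with rfl | hi2
  · -- i = 1
    obtain ⟨c, rfl⟩ : ∃ c, m = c+2 := ⟨m-2, by omega⟩
    have e1 : (c+2-1).choose 1 = c+1 := by
      rw [show c+2-1 = c+1 from by omega, Nat.choose_one_right]
    have e2 : (c+2-1).choose 0 = 1 := Nat.choose_zero_right _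
    have e3 : (c+2).choose 2 * 2 = (c+2) * (c+1) := by
      have h := Nat.choose_succ_right_eq (c+2) 1
      rw [Nat.choose_one_right, show c+2-1 = c+1 from by omega] at h
      exact h
    have h4 : 2^(2*1) = 4 := by norm_num
    rw [show (2:ℕ)*1 = 2 from rfl] at *
    nlinarith [e3]
  · -- i ≥ 2, m ≥ 4
    have hm4 : 4 ≤ m := by omega
    have h1 : 2 * ((m-i).choose i) + (m-i).choose (i-1) ≤ 2 * ((m+1-i).choose i) := by
      have pas := pascal' (m+1-i) i (by omega) (by omega)
      rw [show m+1-i-1 = m-i from by omega] at pas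
      omega
    have h2 : (m+1).choose i * ((m+1-i).choose i) = (m+1).choose (2*i) * (2*i).choose i :=
      choose_mul_choose (m+1) i (by omega)
    have h3 : 2 * (2*i).choose i ≤ 2^(2*i) := central_bound i (by omega)
    have h4 : (m+1).choose (2*i) = m.choose (2*i - 1) + m.choose (2*i) := by
      have := pascal' (m+1) (2*i) (by omega) (by omega)
      rw [show m+1-1 = m from by omega] at this
      omega
    have h5 : m.choose (2*i - 1) ≤ m * m.choose (2*i) := by
      have he : m.choose (2*i) * (2*i) = m.choose (2*i-1) * (m - (2*i-1)) := by
        have := Nat.choose_succ_right_eq m (2*i-1)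
        rw [show 2*i-1+1 = 2*i from by omega] at this
        exact this
      calc m.choose (2*i-1) ≤ m.choose (2*i-1) * (m - (2*i-1)) :=
            Nat.le_mul_of_pos_right _ (by omega)
        _ = m.choose (2*i) * (2*i) := he.symm
        _ ≤ m.choose (2*i) * m := Nat.mul_le_mul_left _ him
        _ = m * m.choose (2*i) := by ring
    have h6 : m + 2 ≤ (m+1).choose i := by
      have e3 : (m+1).choose 2 * 2 = (m+1) * m := by
        have h := Nat.choose_succ_right_eq (m+1) 1
        rw [Nat.choose_one_right, show m+1-1 = m from by omega] at h
        exact h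
      have step1 : m + 2 ≤ (m+1).choose 2 := by nlinarith [e3]
      exact le_trans step1 (choose_ge_of_between (by omega) (by omega) (by omega))
    have h7 : 0 < m.choose (2*i) := Nat.choose_pos (by omega)
    have h8 : 0 < 2^(2*i) := by positivity
    have key : 2 * ((m+1-i).choose i) * ((m+1).choose i) <
        2^(2*i) * m.choose (2*i) * ((m+1).choose i) := by
      calc 2 * ((m+1-i).choose i) * ((m+1).choose i)
          = 2 * ((m+1).choose (2*i) * (2*i).choose i) := by rw [← h2]; ring
        _ ≤ 2^(2*i) * ((m+1).choose (2*i)) := by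
            calc 2 * ((m+1).choose (2*i) * (2*i).choose i)
                = (2 * (2*i).choose i) * (m+1).choose (2*i) := by ring
              _ ≤ 2^(2*i) * (m+1).choose (2*i) := Nat.mul_le_mul_right _ h3
        _ ≤ 2^(2*i) * (m.choose (2*i) * (1 + m)) := by
            refine Nat.mul_le_mul_left _ ?_
            rw [h4]
            nlinarith [h5]
        _ < 2^(2*i) * m.choose (2*i) * ((m+1).choose i) := by
            have hin : m.choose (2*i) * (1+m) < m.choose (2*i) * ((m+1).choose i) :=
              (Nat.mul_lt_mul_left h7).mpr (by omega)
            calc 2^(2*i) * (m.choose (2*i) * (1+m))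
                < 2^(2*i) * (m.choose (2*i) * ((m+1).choose i)) :=
                  (Nat.mul_lt_mul_left h8).mpr hin
              _ = 2^(2*i) * m.choose (2*i) * ((m+1).choose i) := by ring
    have hfin : 2 * ((m+1-i).choose i) < 2^(2*i) * m.choose (2*i) :=
      Nat.lt_of_mul_lt_mul_right key
    omega

lemma L2 (ν e : ℕ) (he : 1 ≤ e) (hev : 2*e ≤ ν) :
    (ν-e).choose e < 2^(2*e+1) * (ν+1).choose (2*e+1) := by
  have h2 : (ν).choose e * ((ν-e).choose e) = ν.choose (2*e) * (2*e).choose e :=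
    choose_mul_choose ν e hev
  have h3 : 2 * (2*e).choose e ≤ 2^(2*e) := central_bound e he
  have h4 : ν.choose (2*e) ≤ (ν+1).choose (2*e+1) := by
    have := pascal' (ν+1) (2*e+1) (by omega) (by omega)
    rw [show ν+1-1 = ν from by omega, show 2*e+1-1 = 2*e from by omega] at this
    omega
  have h5 : 1 ≤ ν.choose e := Nat.choose_pos (by omega)
  have h6 : 1 ≤ (ν+1).choose (2*e+1) := Nat.choose_pos (by omega)
  have hA : 2 * ((ν-e).choose e) ≤ 2^(2*e) * ((ν+1).choose (2*e+1)) := by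
    calc 2 * ((ν-e).choose e) ≤ 2 * (ν.choose e * ((ν-e).choose e)) := by
          nlinarith [h5, Nat.zero_le ((ν-e).choose e)]
      _ = (2 * (2*e).choose e) * ν.choose (2*e) := by rw [h2]; ring
      _ ≤ 2^(2*e) * ν.choose (2*e) := Nat.mul_le_mul_right _ h3
      _ ≤ 2^(2*e) * ((ν+1).choose (2*e+1)) := Nat.mul_le_mul_left _ h4
  have hp : 2^(2*e+1) = 2 * 2^(2*e) := by rw [pow_succ]; ring
  have h8 : 0 < 2^(2*e) := by positivity
  nlinarith [hA, h6, h8]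

lemma key_identity (n ν ρ : ℕ) (hρ : ρ ≤ 1) (hnν : n = 2 * ν + ρ)
    (x : ℕ → ℝ)
    (hx : ∀ u v : ℝ, (u + v) ^ (n + 2) - u ^ (n + 2) - v ^ (n + 2) =
      u * v * ∑ j ∈ Finset.range (ν + 1), x j * (u + v) ^ (n - 2 * j) * (u * v) ^ j)
    (q : Polynomial ℝ)
    (hq : q = ∑ j ∈ Finset.range (ν + 1), C (x j) * X ^ (ν - j)) :
    q.comp (X + C 2) = (X + C 2)^(ν+1) - Pb (ν+1) + C (ρ:ℝ) * Cb ν := by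
  rw [← sub_eq_zero]
  apply Polynomial.eq_zero_of_infinite_isRoot
  have hinj : Set.InjOn (fun t : ℝ => t + 1/t) (Set.Ioi 1) := by
    intro a ha b hb hab
    simp only [Set.mem_Ioi] at ha hb
    have ha0 : a ≠ 0 := by linarith
    have hb0 : b ≠ 0 := by linarith
    field_simp at hab
    have h : (a - b) * (a*b - 1) = 0 := by linear_combination hab
    rcases mul_eq_zero.mp h with h' | h'
    · linarith
    · nlinarith
  refine Set.Infinite.mono ?_ ((Set.infinite_image_iff hinj).mpr (Set.Ioi_infinite 1))
  rintro w ⟨t, ht, rfl⟩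
  simp only [Set.mem_Ioi] at ht
  show IsRoot _ (t + 1/t)
  have ht0 : t ≠ 0 := by linarith
  have ht1 : t + 1 ≠ 0 := by linarith
  have h := hx t 1
  simp only [mul_one, one_pow, one_mul] at h
  have hqe : q.eval (t+1/t+2) = ∑ j ∈ Finset.range (ν+1), x j * (t+1/t+2)^(ν-j) := by
    rw [hq]
    simp [eval_finset_sum]
  have hterm : ∀ j ∈ Finset.range (ν+1),
      x j * (t+1/t+2)^(ν-j) * (t^(ν+1) * (t+1)^ρ) = t * (x j * (t+1)^(n-2*j) * t^j) := by
    intro j hj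
    simp only [Finset.mem_range] at hj
    have hsub : n - 2*j = 2*(ν-j) + ρ := by omega
    have hsplit : t^(ν+1) = t^(ν-j) * t^(j+1) := by rw [← pow_add]; congr 1; omega
    have e3 : (t+1/t+2)^(ν-j) * t^(ν-j) = (t+1)^(2*(ν-j)) := by
      rw [← mul_pow, show (t+1/t+2)*t = (t+1)^2 from by field_simp; ring, ← pow_mul]
    rw [hsub, hsplit, pow_add (t+1) (2*(ν-j)) ρ]
    calc x j * (t+1/t+2)^(ν-j) * (t^(ν-j) * t^(j+1) * (t+1)^ρ)
        = x j * ((t+1/t+2)^(ν-j) * t^(ν-j)) * (t^(j+1) * (t+1)^ρ) := by ring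
      _ = x j * (t+1)^(2*(ν-j)) * (t^(j+1) * (t+1)^ρ) := by rw [e3]
      _ = t * (x j * ((t+1)^(2*(ν-j)) * (t+1)^ρ) * t^j) := by ring
  have hA : q.eval (t+1/t+2) * (t^(ν+1) * (t+1)^ρ) = (t+1)^(n+2) - t^(n+2) - 1 := by
    rw [hqe, Finset.sum_mul, Finset.sum_congr rfl hterm, ← Finset.mul_sum, ← h]
  have hB := Pb_eval t ht0 (ν+1)
  have hCb1 : (Cb ν).eval (t+1/t) * (t^ν * (t+1)) = t^(2*ν+1) + 1 := Cb_eval t ht0 ν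
  have e2 : (t+1/t+2)^(ν+1) * t^(ν+1) = (t+1)^(2*ν+2) := by
    rw [← mul_pow, show (t+1/t+2)*t = (t+1)^2 from by field_simp; ring, ← pow_mul,
      show 2*(ν+1) = 2*ν+2 from by ring]
  have hPb1 : (Pb (ν+1)).eval (t+1/t) * t^(ν+1) = t^(2*ν+2) + 1 := by
    rw [hB]
    rw [add_mul, ← mul_pow (1/t), one_div, inv_mul_cancel₀ ht0, one_pow]; ring
  simp only [IsRoot.def, eval_sub, eval_add, eval_mul, eval_comp, eval_pow, eval_C, eval_X,
    eval_ofNat]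
  interval_cases ρ
  · -- ρ = 0
    rw [show n = 2*ν from by omega] at hA
    simp only [pow_zero, mul_one] at hA
    rw [show ((2*ν:ℕ)+2 : ℕ) = 2*ν+2 from rfl] at hA
    simp only [Nat.cast_zero, zero_mul, add_zero]
    refine mul_right_cancel₀ (pow_ne_zero (ν+1) ht0) ?_
    linear_combination hA - e2 + hPb1
  · -- ρ = 1
    rw [show n = 2*ν+1 from by omega] at hA
    simp only [pow_one] at hA
    simp only [Nat.cast_one, one_mul]
    refine mul_right_cancel₀
      (show t^(ν+1) * (t+1) ≠ 0 from mul_ne_zero (pow_ne_zero _ ht0) ht1) ?_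
    linear_combination hA - (t+1) * e2 + (t+1) * hPb1 - t * hCb1

/-- Lemma 3.8: all derivatives at `y = 2` of the polynomial
`q(y) = ∑_{j=0}^{ν} x_j y^{ν−j}` are strictly positive, where the `x_j` are defined by
`((u+v)^{n+2} − u^{n+2} − v^{n+2}) = uv ∑_j x_j (u+v)^{n−2j}(uv)^j`. -/
theorem lemma_3_8 (n ν ρ : ℕ) (hn : 2 ≤ n) (hρ : ρ ≤ 1) (hnν : n = 2 * ν + ρ)
    (x : ℕ → ℝ)
    (hx : ∀ u v : ℝ, (u + v) ^ (n + 2) - u ^ (n + 2) - v ^ (n + 2) =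
      u * v * ∑ j ∈ Finset.range (ν + 1), x j * (u + v) ^ (n - 2 * j) * (u * v) ^ j)
    (q : Polynomial ℝ)
    (hq : q = ∑ j ∈ Finset.range (ν + 1), C (x j) * X ^ (ν - j)) :
    ∀ j ≤ ν, 0 < (derivative^[j] q).eval 2 := by
  have hν1 : 1 ≤ ν := by omega
  have key := key_identity n ν ρ hρ hnν x hx q hq
  intro j hj
  have h1 : derivative^[j] q = Nat.factorial j • (Polynomial.hasseDeriv j q) := by
    rw [← Polynomial.factorial_smul_hasseDeriv (R := ℝ) (k := j)]
    rfl
  have hder : (derivative^[j] q).eval 2 = (j.factorial : ℝ) * (q.comp (X + C 2)).coeff j := by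
    rw [h1, nsmul_eq_mul, eval_mul, eval_natCast, ← Polynomial.taylor_coeff,
      Polynomial.taylor_apply]
  rw [hder]
  refine mul_pos (by positivity) ?_
  rw [key, coeff_add, coeff_sub, coeff_C_mul, coeff_X_add_C_pow]
  have hpb := Pb_coeff_bound (ν+1) j
  have hcb := Cb_coeff_bound ν j
  set pc := (Pb (ν+1)).coeff j with hpcdef
  set cc := (Cb ν).coeff j with hccdef
  have hρ0 : (0:ℝ) ≤ (ρ:ℝ) := by positivity
  have hρ1 : (ρ:ℝ) ≤ 1 := by exact_mod_cast hρ
  have hcc1 : -|cc| ≤ (ρ:ℝ) * cc := by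
    nlinarith [mul_le_mul_of_nonneg_left (neg_abs_le cc) hρ0,
      mul_le_of_le_one_left (abs_nonneg cc) hρ1]
  have hpc1 : pc ≤ |pc| := le_abs_self pc
  have hmain : |pc| + |cc| < (2:ℝ)^(ν+1-j) * (((ν+1).choose j : ℕ) : ℝ) := by
    by_cases hpar : (ν+1-j) % 2 = 0
    · -- even case
      obtain ⟨i, hi0, hi1, hi2, hi3, hi4⟩ :
          ∃ i, (ν+1-j)/2 = i ∧ 1 ≤ i ∧ 2*i ≤ ν+1 ∧ (ν+1) - (ν+1-j)/2 = ν+1-i ∧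
            (ν-j)/2 = i-1 :=
        ⟨(ν+1-j)/2, rfl, by omega, by omega, by omega, by omega⟩
      rw [hi0] at hpb
      rw [hi4, show ν - (i-1) = ν+1-i from by omega] at hcb
      have hL1 := L1 (ν+1) i hi1 hi2 (by omega)
      have hsym : (ν+1).choose j = (ν+1).choose (2*i) :=
        Nat.choose_symm_of_eq_add (show ν+1 = j + 2*i from by omega)
      have hexp : ν+1-j = 2*i := by omega
      rw [hexp, hsym]
      calc |pc| + |cc| ≤ 2*(((ν+1-i).choose i : ℕ) : ℝ) + (((ν+1-i).choose (i-1) : ℕ) : ℝ) :=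
            add_le_add hpb hcb
        _ < (2:ℝ)^(2*i) * (((ν+1).choose (2*i) : ℕ) : ℝ) := by
            exact_mod_cast hL1
    · -- odd case
      obtain ⟨e, he0, he1, he2⟩ :
          ∃ e, (ν-j)/2 = e ∧ 2*e = ν-j ∧ ν+1-j = 2*e+1 :=
        ⟨(ν-j)/2, rfl, by omega, by omega⟩
      have hpc0 : pc = 0 := Pb_parity (ν+1) j (by omega)
      rw [he0] at hcb
      have hn2 : (ν-e).choose e < 2^(2*e+1) * (ν+1).choose (2*e+1) := by
        rcases Nat.eq_zero_or_pos e with rfl | hepos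
        · simp only [Nat.sub_zero, Nat.choose_zero_right, mul_zero, zero_add, pow_one,
            Nat.choose_one_right]
          omega
        · exact L2 ν e hepos (by omega)
      have hsym : (ν+1).choose j = (ν+1).choose (2*e+1) :=
        Nat.choose_symm_of_eq_add (show ν+1 = j + (2*e+1) from by omega)
      rw [he2, hsym, hpc0]
      calc |(0:ℝ)| + |cc| = |cc| := by simp
        _ ≤ (((ν-e).choose e : ℕ) : ℝ) := hcb
        _ < (2:ℝ)^(2*e+1) * (((ν+1).choose (2*e+1) : ℕ) : ℝ) := by exact_mod_cast hn2
  linarith [hmain, hpc1, hcc1]
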